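/- Let β, β' ∈ Π_aff^{re,+} with β + β' = c, and let m be a positive integer. Then the product (s_β s_{β'})^m is reduced, i.e. its length equals the sum of the lengths of its 2m reflection factors; in particular ℓ((s_β s_{β'})^m) = 2m(n−1). -/

import Mathlib

open scoped BigOperators

namespace AffA

/-- Elements `⟨w, λ⟩` representing `w · t_λ` in the affine Weyl group
`W_aff = W ⋉ Q∨` of type `A_{n-1}^{(1)}`; the translation part `λ` is recorded
in `ε`-coordinates. -/
@[ext]
structure Aff (n : ℕ) where
  w : Equiv.Perm (Fin n)
  t : Fin n → ℤ

namespace Aff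

variable {n : ℕ}

instance : Nonempty (Aff n) := ⟨⟨1, 0⟩⟩

/-- multiplication: `(w t_λ)(v t_μ) = (wv) t_{v⁻¹λ + μ}`. -/
def mul' (x y : Aff n) : Aff n := ⟨x.w * y.w, fun i => x.t (y.w i) + y.t i⟩

def inv' (x : Aff n) : Aff n := ⟨x.w⁻¹, fun i => - x.t (x.w⁻¹ i)⟩

instance : Group (Aff n) where
  mul := mul'
  one := ⟨1, 0⟩
  inv := inv'
  mul_assoc a b c := by
    show mul' (mul' a b) c = mul' a (mul' b c)
    simp only [mul', Aff.mk.injEq]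
    refine ⟨mul_assoc _ _ _, funext fun i => ?_⟩
    simp [Equiv.Perm.mul_apply, add_assoc]
  one_mul a := by
    obtain ⟨aw, av⟩ := a
    show mul' ⟨1, 0⟩ ⟨aw, av⟩ = ⟨aw, av⟩
    simp only [mul', Aff.mk.injEq]
    exact ⟨one_mul _, funext fun i => by simp⟩
  mul_one a := by
    obtain ⟨aw, av⟩ := a
    show mul' ⟨aw, av⟩ ⟨1, 0⟩ = ⟨aw, av⟩
    simp only [mul', Aff.mk.injEq]
    exact ⟨mul_one _, funext fun i => by simp⟩
  inv_mul_cancel a := by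
    obtain ⟨aw, av⟩ := a
    show mul' (inv' ⟨aw, av⟩) ⟨aw, av⟩ = ⟨1, 0⟩
    simp only [mul', inv', Aff.mk.injEq]
    exact ⟨inv_mul_cancel _, funext fun i => by simp⟩

/-- cyclic successor on the vertices `α_0, …, α_{n-1}` of the affine Dynkin diagram. -/
def fsucc (i : Fin n) : Fin n :=
  ⟨(i.val + 1) % n, Nat.mod_lt _ (Nat.lt_of_le_of_lt (Nat.zero_le _) i.isLt)⟩

/-- the coefficient of `α_0`. -/
def coeff0 (a : Fin n → ℤ) : ℤ := if h : 0 < n then a ⟨0, h⟩ else 0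

/-- the `ε`-coordinates of the finite part of an element of the affine root
lattice written in the coordinates of the simple roots `α_0, …, α_{n-1}`
(`δ` is sent to `0`). -/
def finPart (a : Fin n → ℤ) : Fin n → ℤ := fun i => a (fsucc i) - a i

/-- `c = δ = α_0 + α_1 + ⋯ + α_{n-1}`, in simple root coordinates. -/
def cvec (n : ℕ) : Fin n → ℤ := fun _ => 1

/-- the affine Cartan matrix of type `A_{n-1}^{(1)}` (for `n ≥ 3`). -/
def cartan (i j : Fin n) : ℤ :=
  if i = j then 2 else if j = fsucc i ∨ i = fsucc j then -1 else 0

/-- the natural pairing `⟨a, b∨⟩` of elements of the affine root lattice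
(simple root coordinates). -/
def pairing (a b : Fin n → ℤ) : ℤ := ∑ i : Fin n, ∑ j : Fin n, a i * cartan i j * b j

/-- real roots of the affine root system: lattice vectors of norm `2`. -/
def IsRealRoot (a : Fin n → ℤ) : Prop := pairing a a = 2

/-- affine positive real roots: real roots with nonnegative coordinates. -/
def IsPosRoot (a : Fin n → ℤ) : Prop := IsRealRoot a ∧ ∀ i, 0 ≤ a i

/-- perpendicularity of affine roots. -/
def Perp (a b : Fin n → ℤ) : Prop := pairing a b = 0

/-- the support of an affine root. -/
def supp (a : Fin n → ℤ) : Finset (Fin n) := Finset.univ.filter fun i => a i ≠ 0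

/-- the supports of `a` and `b` are disconnected in the affine Dynkin diagram
(a cycle on `α_0, …, α_{n-1}`): no vertex of one is equal or adjacent to a
vertex of the other. -/
def Disconn (a b : Fin n → ℤ) : Prop :=
  ∀ i j : Fin n, a i ≠ 0 → b j ≠ 0 → i ≠ j ∧ j ≠ fsucc i ∧ i ≠ fsucc j

/-- for roots `a, b < c` (0–1 vectors), `a ∩ b = Σ_{α_i ∈ supp a ∩ supp b} α_i`. -/
def inter (a b : Fin n → ℤ) : Fin n → ℤ :=
  fun i => if a i ≠ 0 ∧ b i ≠ 0 then 1 else 0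

instance : Nonempty (Equiv.Perm (Fin n)) := ⟨1⟩

/-- the reflection `s_β = s_α t_{mα}` associated to the real root `β = α + mδ`
(given in simple root coordinates). -/
noncomputable def sref (a : Fin n → ℤ) : Aff n :=
  ⟨Classical.epsilon fun w : Equiv.Perm (Fin n) => ∃ p q : Fin n,
      finPart a = Pi.single p 1 - Pi.single q 1 ∧ w = Equiv.swap p q,
    fun i => coeff0 a * finPart a i⟩

/-- the simple reflections `s_0, …, s_{n-1}`. -/
noncomputable def simple (i : Fin n) : Aff n := sref (Pi.single i 1)

/-- the Coxeter length, via the Iwahori–Matsumoto formula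
`ℓ(w t_λ) = Σ_{γ ∈ Π⁺} |χ(w·γ < 0) + ⟨λ, γ⟩|`. -/
def len (x : Aff n) : ℕ :=
  ∑ p : Fin n, ∑ q : Fin n,
    if p < q then ((if x.w q < x.w p then (1 : ℤ) else 0) + (x.t p - x.t q)).natAbs else 0

/-- translation `t_v` by an element `v` of the (co)root lattice given in
`ε`-coordinates. -/
def trE (v : Fin n → ℤ) : Aff n := ⟨1, v⟩

/-- a Bruhat step: an edge of the moment graph which increases the length. -/
def bstep (u v : Aff n) : Prop :=
  (∃ a, IsPosRoot a ∧ v = u * sref a) ∧ len u < len v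

/-- the Bruhat order: `u ≤ v` iff there is an increasing chain from `u` to `v`
in the moment graph. -/
def ble (u v : Aff n) : Prop := Relation.ReflTransGen bstep u v

/-- there is a chain in the moment graph from `u` to `v` of total degree `≤ d`. -/
def ChainTo (d : Fin n → ℤ) (u v : Aff n) : Prop :=
  ∃ l : List (Fin n → ℤ),
    (∀ b ∈ l, IsPosRoot b) ∧ l.sum ≤ d ∧ v = u * (l.map sref).prod

/-- the set of elements reachable from some `u' ≤ u` by a chain of degree `≤ d`. -/
def nbhdSet (d : Fin n → ℤ) (u : Aff n) : Set (Aff n) :=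
  {v | ∃ u', ble u' u ∧ ChainTo d u' v}

/-- the combinatorial curve neighborhood `Γ_d(u)`: the Bruhat-maximal elements
among those reachable from some `u' ≤ u` by a chain of degree `≤ d`. -/
def curveNbhd (d : Fin n → ℤ) (u : Aff n) : Set (Aff n) :=
  {v | v ∈ nbhdSet d u ∧ ∀ x ∈ nbhdSet d u, ble v x → x = v}

/-- one step of the Hecke product. -/
noncomputable def heckeStep (u : Aff n) (i : Fin n) : Aff n :=
  if len u < len (u * simple i) then u * simple i else u

/-- the Hecke product `u · v`: multiply `u` on the right, left to right, by the
letters of a reduced word for `v`. -/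
noncomputable def heckeMul (u v : Aff n) : Aff n :=
  (Classical.epsilon fun l : List (Fin n) =>
      (l.map simple).prod = v ∧ l.length = len v).foldl heckeStep u

/-- the Hecke product `s_{β_1} · s_{β_2} · ⋯ · s_{β_r}` of the reflections of a
list of roots. -/
noncomputable def heckeList (l : List (Fin n → ℤ)) : Aff n :=
  l.foldl (fun u b => heckeMul u (sref b)) 1

/-- the defining recursion for `z_d`: `z_0 = id` and `z_d = s_α · z_{d-α}`
(Hecke product), where `α` is any maximal root with `α ≤ d`. -/
inductive IsZ : (Fin n → ℤ) → Aff n → Prop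
  | zero : IsZ 0 1
  | step {d a : Fin n → ℤ} {x : Aff n} :
      IsPosRoot a → a ≤ d →
      (∀ b, IsPosRoot b → b ≤ d → a ≤ b → b = a) →
      IsZ (d - a) x → IsZ d (heckeMul (sref a) x)

end Aff
end AffA

namespace AffA.Aff

variable {n : ℕ}

lemma mk_mul (w1 w2 : Equiv.Perm (Fin n)) (t1 t2 : Fin n → ℤ) :
    (⟨w1, t1⟩ * ⟨w2, t2⟩ : Aff n) = ⟨w1 * w2, fun i => t1 (w2 i) + t2 i⟩ := rfl

lemma one_def : (1 : Aff n) = ⟨1, 0⟩ := rfl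

lemma mod_succ (k : ℕ) (hk : k < n) : (k + 1) % n = if k + 1 = n then 0 else k + 1 := by
  rcases Nat.lt_or_ge (k + 1) n with hl | hg
  · rw [Nat.mod_eq_of_lt hl, if_neg (by omega)]
  · have h : k + 1 = n := by omega
    rw [h, Nat.mod_self, if_pos rfl]

lemma fsucc_bij : Function.Bijective (fsucc (n := n)) := by
  rw [← Finite.injective_iff_bijective]
  intro i j h
  have hi := i.isLt
  have hj := j.isLt
  have h' : (i.val + 1) % n = (j.val + 1) % n := congrArg Fin.val h
  rw [mod_succ i.val hi, mod_succ j.val hj] at h'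
  ext
  split_ifs at h' <;> omega

lemma fsucc_ne (hn : 3 ≤ n) (i : Fin n) : fsucc i ≠ i := by
  intro h
  have h' : (i.val + 1) % n = i.val := congrArg Fin.val h
  have hi := i.isLt
  rw [mod_succ i.val hi] at h'
  split_ifs at h' <;> omega

lemma fsucc_no2 (hn : 3 ≤ n) (i j : Fin n) (h1 : j = fsucc i) (h2 : i = fsucc j) : False := by
  have hv1 : j.val = (i.val + 1) % n := congrArg Fin.val h1
  have hv2 : i.val = (j.val + 1) % n := congrArg Fin.val h2
  have hi := i.isLt
  have hj := j.isLt
  rw [mod_succ i.val hi] at hv1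
  rw [mod_succ j.val hj] at hv2
  split_ifs at hv1 hv2 <;> omega

lemma sum_fsucc (a : Fin n → ℤ) : ∑ i : Fin n, a (fsucc i) = ∑ i : Fin n, a i :=
  Fintype.sum_bijective fsucc fsucc_bij _ _ (fun _ => rfl)

lemma sum_finPart (a : Fin n → ℤ) : ∑ i : Fin n, finPart a i = 0 := by
  unfold finPart
  rw [Finset.sum_sub_distrib, sum_fsucc, sub_self]

lemma pairing_self (hn : 3 ≤ n) (a : Fin n → ℤ) :
    pairing a a = ∑ i : Fin n, (finPart a i) ^ 2 := by
  have hc : ∀ i j : Fin n, a i * cartan i j * a j =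
      2 * (if j = i then a i * a j else 0) - (if j = fsucc i then a i * a j else 0)
        - (if i = fsucc j then a i * a j else 0) := by
    intro i j
    unfold cartan
    by_cases h1 : i = j
    · subst h1
      have h2 : ¬ (i = fsucc i) := Ne.symm (fsucc_ne hn i)
      have h3 : ¬ (i = fsucc i ∨ i = fsucc i) := by tauto
      rw [if_pos rfl, if_pos rfl, if_neg h2]
      ring
    · have h1' : ¬ j = i := fun h => h1 h.symm
      rw [if_neg h1, if_neg h1']
      by_cases h2 : j = fsucc i
      · have h3 : ¬ i = fsucc j := fun h3 => fsucc_no2 hn i j h2 h3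
        rw [if_pos (Or.inl h2), if_pos h2, if_neg h3]; ring
      · by_cases h3 : i = fsucc j
        · rw [if_pos (Or.inr h3), if_neg h2, if_pos h3]; ring
        · rw [if_neg (by tauto), if_neg h2, if_neg h3]; ring
  have step1 : pairing a a =
      2 * (∑ i : Fin n, a i * a i) - (∑ i : Fin n, a i * a (fsucc i))
        - (∑ i : Fin n, a (fsucc i) * a i) := by
    unfold pairing
    calc ∑ i : Fin n, ∑ j : Fin n, a i * cartan i j * a j
        = ∑ i : Fin n, (2 * (a i * a i) - a i * a (fsucc i)
            - ∑ j : Fin n, (if i = fsucc j then a i * a j else 0)) := by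
          refine Finset.sum_congr rfl fun i _ => ?_
          rw [Finset.sum_congr rfl fun j _ => hc i j]
          rw [Finset.sum_sub_distrib, Finset.sum_sub_distrib, ← Finset.mul_sum]
          rw [Finset.sum_ite_eq' Finset.univ i (fun j => a i * a j)]
          rw [Finset.sum_ite_eq' Finset.univ (fsucc i) (fun j => a i * a j)]
          simp
      _ = 2 * (∑ i : Fin n, a i * a i) - (∑ i : Fin n, a i * a (fsucc i))
            - (∑ i : Fin n, ∑ j : Fin n, (if i = fsucc j then a i * a j else 0)) := by
          rw [Finset.sum_sub_distrib, Finset.sum_sub_distrib, ← Finset.mul_sum]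
      _ = _ := by
          congr 1
          rw [Finset.sum_comm]
          refine Finset.sum_congr rfl fun j _ => ?_
          rw [Finset.sum_ite_eq' Finset.univ (fsucc j) (fun i => a i * a j)]
          simp
  have step2 : ∑ i : Fin n, (finPart a i) ^ 2 =
      (∑ i : Fin n, a (fsucc i) * a (fsucc i)) - 2 * (∑ i : Fin n, a (fsucc i) * a i)
        + ∑ i : Fin n, a i * a i := by
    rw [Finset.mul_sum, ← Finset.sum_sub_distrib, ← Finset.sum_add_distrib]
    refine Finset.sum_congr rfl fun i _ => ?_
    unfold finPart
    ring
  have hre : ∑ i : Fin n, a (fsucc i) * a (fsucc i) = ∑ i : Fin n, a i * a i :=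
    Fintype.sum_bijective fsucc fsucc_bij _ _ (fun _ => rfl)
  have hcm : ∑ i : Fin n, a (fsucc i) * a i = ∑ i : Fin n, a i * a (fsucc i) :=
    Finset.sum_congr rfl fun i _ => mul_comm _ _
  rw [step1, step2, hre, hcm]
  ring

lemma exists_pq (f : Fin n → ℤ) (hs : ∑ i : Fin n, f i = 0) (h2 : ∑ i : Fin n, (f i) ^ 2 = 2) :
    ∃ p q : Fin n, p ≠ q ∧ f = Pi.single p 1 - Pi.single q 1 := by
  classical
  have hb : ∀ i, f i = -1 ∨ f i = 0 ∨ f i = 1 := by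
    intro i
    have h1 : (f i) ^ 2 ≤ 2 := by
      have hle : (f i) ^ 2 ≤ ∑ j : Fin n, (f j) ^ 2 :=
        Finset.single_le_sum (fun j _ => sq_nonneg (f j)) (Finset.mem_univ i)
      omega
    have hl : -1 ≤ f i := by nlinarith
    have hr : f i ≤ 1 := by nlinarith
    omega
  set P := Finset.univ.filter (fun i => f i = 1) with hP
  set N := Finset.univ.filter (fun i => f i = -1) with hN
  have hsq : ∑ i : Fin n, (f i) ^ 2 =
      (∑ i : Fin n, (if f i = 1 then (1:ℤ) else 0)) + ∑ i : Fin n, (if f i = -1 then (1:ℤ) else 0) := by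
    rw [← Finset.sum_add_distrib]
    refine Finset.sum_congr rfl fun i _ => ?_
    rcases hb i with h | h | h <;> simp [h]
  have hlin : ∑ i : Fin n, f i =
      (∑ i : Fin n, (if f i = 1 then (1:ℤ) else 0)) - ∑ i : Fin n, (if f i = -1 then (1:ℤ) else 0) := by
    rw [← Finset.sum_sub_distrib]
    refine Finset.sum_congr rfl fun i _ => ?_
    rcases hb i with h | h | h <;> simp [h]
  rw [hsq] at h2
  rw [hlin] at hs
  have hPc : ∑ i : Fin n, (if f i = 1 then (1:ℤ) else 0) = (P.card : ℤ) := by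
    rw [hP, Finset.card_filter]
    push_cast
    rfl
  have hNc : ∑ i : Fin n, (if f i = -1 then (1:ℤ) else 0) = (N.card : ℤ) := by
    rw [hN, Finset.card_filter]
    push_cast
    rfl
  rw [hPc, hNc] at h2 hs
  have hP1 : P.card = 1 := by omega
  have hN1 : N.card = 1 := by omega
  obtain ⟨p, hp⟩ := Finset.card_eq_one.mp hP1
  obtain ⟨q, hq⟩ := Finset.card_eq_one.mp hN1
  have hfp : f p = 1 := by
    have : p ∈ P := by rw [hp]; exact Finset.mem_singleton_self p
    exact (Finset.mem_filter.mp this).2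
  have hfq : f q = -1 := by
    have : q ∈ N := by rw [hq]; exact Finset.mem_singleton_self q
    exact (Finset.mem_filter.mp this).2
  have hpq : p ≠ q := fun h => by rw [h, hfq] at hfp; omega
  refine ⟨p, q, hpq, funext fun i => ?_⟩
  simp only [Pi.sub_apply, Pi.single_apply]
  by_cases hip : i = p
  · subst hip
    rw [if_pos rfl, if_neg hpq, hfp]
    ring
  · by_cases hiq : i = q
    · subst hiq
      rw [if_neg hip, if_pos rfl, hfq]
      ring
    · have h1 : f i ≠ 1 := fun h => hip (by
        have : i ∈ P := Finset.mem_filter.mpr ⟨Finset.mem_univ i, h⟩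
        rw [hp] at this
        exact Finset.mem_singleton.mp this)
      have h2 : f i ≠ -1 := fun h => hiq (by
        have : i ∈ N := Finset.mem_filter.mpr ⟨Finset.mem_univ i, h⟩
        rw [hq] at this
        exact Finset.mem_singleton.mp this)
      rw [if_neg hip, if_neg hiq]
      rcases hb i with h | h | h <;> omega

lemma sref_eq (a : Fin n → ℤ) (p q : Fin n) (hpq : p ≠ q)
    (hf : finPart a = Pi.single p 1 - Pi.single q 1) :
    sref a = ⟨Equiv.swap p q, fun i => coeff0 a * finPart a i⟩ := by
  obtain ⟨p', q', hf', hw⟩ := Classical.epsilon_spec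
    (p := fun w : Equiv.Perm (Fin n) => ∃ p q : Fin n,
      finPart a = Pi.single p 1 - Pi.single q 1 ∧ w = Equiv.swap p q)
    ⟨Equiv.swap p q, p, q, hf, rfl⟩
  have h1 := congrFun (hf.symm.trans hf') p
  have h2 := congrFun (hf.symm.trans hf') q
  simp only [Pi.sub_apply, Pi.single_apply, if_pos rfl, if_neg hpq, if_neg (Ne.symm hpq)] at h1 h2
  have hp' : p' = p := by
    by_cases h : p = p'
    · exact h.symm
    · exfalso
      by_cases h' : p = q' <;> simp [h, h'] at h1 <;> split_ifs at h1 <;> omega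
  subst hp'
  have hq' : q' = q := by
    by_cases h : q = q'
    · exact h.symm
    · exfalso
      by_cases h' : q = p' <;> simp [h, h', Ne.symm hpq] at h2 <;> split_ifs at h2 <;> omega
  subst hq'
  unfold sref
  rw [hw]

lemma fin_step (k : ℕ) (hk : k + 1 < n) (β : Fin n → ℤ) :
    β ⟨k + 1, hk⟩ = β ⟨k, by omega⟩ + finPart β ⟨k, by omega⟩ := by
  have hs : fsucc (⟨k, by omega⟩ : Fin n) = ⟨k + 1, hk⟩ := by
    ext
    simp only [fsucc]
    exact Nat.mod_eq_of_lt hk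
  unfold finPart
  rw [hs]
  ring

lemma val_zero_eq (hn : 3 ≤ n) (β : Fin n → ℤ) (p q : Fin n)
    (hf : finPart β = Pi.single p 1 - Pi.single q 1)
    (h01 : ∀ i, β i = 0 ∨ β i = 1) :
    (p < q → β ⟨0, by omega⟩ = 0) ∧ (q < p → β ⟨0, by omega⟩ = 1) := by
  have hconst : ∀ k, ∀ hk : k < n,
      (∀ j, ∀ hj : j < k, ((⟨j, by omega⟩ : Fin n) ≠ p ∧ (⟨j, by omega⟩ : Fin n) ≠ q)) →
      β ⟨k, hk⟩ = β ⟨0, by omega⟩ := by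
    intro k
    induction k with
    | zero => intro hk _; rfl
    | succ k ih =>
      intro hk hne
      have hk' : k < n := by omega
      rw [fin_step k hk β]
      have hz : finPart β ⟨k, by omega⟩ = 0 := by
        rw [hf]
        obtain ⟨h1, h2⟩ := hne k (by omega)
        simp [Pi.single_apply, h1, h2]
      rw [hz, add_zero]
      exact ih hk' (fun j hj => hne j (by omega))
  constructor
  · intro hlt
    have hlt' : p.val < q.val := Fin.lt_def.mp hlt
    have hbp : β p = β ⟨0, by omega⟩ := by
      have := hconst p.val p.isLt (fun j hj => by
        constructor
        · intro he
          have hv : j = p.val := by simpa using congrArg Fin.val he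
          omega
        · intro he
          have hv : j = q.val := by simpa using congrArg Fin.val he
          omega)
      rwa [Fin.eta] at this
    have hfp : finPart β p = 1 := by
      rw [hf]
      simp [Pi.single_apply, ne_of_lt hlt]
    have h1 := h01 p
    have h2 := h01 (fsucc p)
    have h3 : β (fsucc p) - β p = 1 := hfp
    omega
  · intro hlt
    have hlt' : q.val < p.val := Fin.lt_def.mp hlt
    have hbq : β q = β ⟨0, by omega⟩ := by
      have := hconst q.val q.isLt (fun j hj => by
        constructor
        · intro he
          have hv : j = p.val := by simpa using congrArg Fin.val he
          omega
        · intro he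
          have hv : j = q.val := by simpa using congrArg Fin.val he
          omega)
      rwa [Fin.eta] at this
    have hfq : finPart β q = -1 := by
      rw [hf]
      simp [Pi.single_apply, ne_of_gt hlt]
    have h1 := h01 q
    have h2 := h01 (fsucc q)
    have h3 : β (fsucc q) - β q = -1 := hfq
    omega

/-- the indicator function of `c` as an integer vector. -/
def sgl (c : Fin n) : Fin n → ℤ := Pi.single c 1

lemma sgl_apply (c i : Fin n) : sgl c i = if i = c then 1 else 0 := Pi.single_apply c 1 i

lemma lemD (c : Fin n) :
    (∑ p : Fin n, ∑ q : Fin n,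
      if p < q then ((sgl c p - sgl c q : ℤ)).natAbs else 0) = n - 1 := by
  have hterm : ∀ p q : Fin n,
      (if p < q then ((sgl c p - sgl c q : ℤ)).natAbs else 0)
        = (if p = c then (if c < q then 1 else 0) else 0)
          + (if q = c then (if p < c then 1 else 0) else 0) := by
    intro p q
    simp only [sgl_apply]
    by_cases h1 : p = c <;> by_cases h2 : q = c
    · subst h1; subst h2; simp [lt_irrefl]
    · subst h1; simp [h2]
    · subst h2; simp [h1]
    · simp [h1, h2]
  rw [Finset.sum_congr rfl fun p _ => Finset.sum_congr rfl fun q _ => hterm p q]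
  simp only [Finset.sum_add_distrib]
  have e1 : (∑ p : Fin n, ∑ q : Fin n, if p = c then (if c < q then (1:ℕ) else 0) else 0)
      = ∑ q : Fin n, (if c < q then 1 else 0) := by
    rw [Finset.sum_comm]
    refine (Finset.sum_congr rfl fun q _ => ?_)
    rw [Finset.sum_ite_eq' Finset.univ c (fun _ => if c < q then (1:ℕ) else 0)]
    simp
  have e2 : (∑ p : Fin n, ∑ q : Fin n, if q = c then (if p < c then (1:ℕ) else 0) else 0)
      = ∑ p : Fin n, (if p < c then 1 else 0) := by
    refine (Finset.sum_congr rfl fun p _ => ?_)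
    rw [Finset.sum_ite_eq' Finset.univ c (fun _ => if p < c then (1:ℕ) else 0)]
    simp
  rw [e1, e2, ← Finset.sum_add_distrib]
  have h3 : ∀ j : Fin n, ((if c < j then (1:ℕ) else 0) + (if j < c then 1 else 0))
      = (if j = c then 0 else 1) := by
    intro j
    by_cases h : j = c
    · simp [h, lt_irrefl]
    · have hv : j.val ≠ c.val := fun hh => h (Fin.ext hh)
      simp only [Fin.lt_def]
      split_ifs <;> omega
  rw [Finset.sum_congr rfl fun j _ => h3 j]
  have h5 : (∑ j : Fin n, if j = c then (1:ℕ) else 0) = 1 := by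
    rw [Finset.sum_ite_eq' Finset.univ c (fun _ => (1:ℕ))]
    simp
  have h6 : (∑ j : Fin n, ((if j = c then (0:ℕ) else 1) + (if j = c then 1 else 0)))
      = ∑ j : Fin n, 1 := Finset.sum_congr rfl fun j _ => by split_ifs <;> rfl
  rw [Finset.sum_add_distrib, h5] at h6
  simp only [Finset.sum_const, Finset.card_univ, Fintype.card_fin, smul_eq_mul, mul_one] at h6
  omega

lemma lemS (a b : Fin n) (hab : a ≠ b) :
    (∑ p : Fin n, ∑ q : Fin n,
      if p < q then (((sgl b p - sgl a p)
        - (sgl b q - sgl a q) : ℤ)).natAbs else 0) = 2 * (n - 1) := by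
  have hterm : ∀ p q : Fin n,
      (if p < q then (((sgl b p - sgl a p)
          - (sgl b q - sgl a q) : ℤ)).natAbs else 0)
        = (if p < q then ((sgl b p - sgl b q : ℤ)).natAbs else 0)
          + (if p < q then ((sgl a p - sgl a q : ℤ)).natAbs else 0) := by
    intro p q
    by_cases hpq : p < q
    · simp only [if_pos hpq, sgl_apply]
      have hne : p ≠ q := ne_of_lt hpq
      split_ifs <;> first | omega | simp_all
    · simp [hpq]
  rw [Finset.sum_congr rfl fun p _ => Finset.sum_congr rfl fun q _ => hterm p q]
  simp only [Finset.sum_add_distrib]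
  rw [lemD, lemD]
  omega

lemma key (a b i j : Fin n) (hab : a < b) (hij : i < j)
    (hw : Equiv.swap a b j < Equiv.swap a b i) :
    ((sgl b i - sgl a i : ℤ) - (sgl b j - sgl a j)) ≤ -1 := by
  by_cases hia : i = a
  · subst hia
    have hja : ¬ (j = i) := ne_of_gt hij
    have hab' : ¬ (i = b) := ne_of_lt hab
    simp only [sgl_apply]
    split_ifs <;> first | omega | simp_all
  · by_cases hjb : j = b
    · subst hjb
      have h2 : ¬ (i = j) := ne_of_lt hij
      have h3 : ¬ (j = a) := ne_of_gt hab
      simp only [sgl_apply]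
      split_ifs <;> first | omega | simp_all
    · exfalso
      by_cases hib : i = b
      · subst hib
        have hja : j ≠ a := ne_of_gt (lt_trans hab hij)
        rw [Equiv.swap_apply_right, Equiv.swap_apply_of_ne_of_ne hja hjb] at hw
        exact absurd hw (not_lt.2 (le_of_lt (lt_trans hab hij)))
      · by_cases hja : j = a
        · subst hja
          rw [Equiv.swap_apply_left, Equiv.swap_apply_of_ne_of_ne hia hib] at hw
          exact absurd hw (not_lt.2 (le_of_lt (lt_trans hij hab)))
        · rw [Equiv.swap_apply_of_ne_of_ne hia hib, Equiv.swap_apply_of_ne_of_ne hja hjb] at hw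
          exact absurd hw (not_lt.2 (le_of_lt hij))

lemma lenF (a b : Fin n) (hab : a < b) :
    len (⟨Equiv.swap a b, 0⟩ : Aff n)
      + len (⟨Equiv.swap a b, fun i => sgl b i - sgl a i⟩ : Aff n)
      = 2 * (n - 1) := by
  have hterm : ∀ p q : Fin n,
      ((if p < q then ((if Equiv.swap a b q < Equiv.swap a b p then (1:ℤ) else 0)
          + ((0 : Fin n → ℤ) p - (0 : Fin n → ℤ) q)).natAbs else 0)
        + (if p < q then ((if Equiv.swap a b q < Equiv.swap a b p then (1:ℤ) else 0)
          + ((sgl b p - sgl a p) - (sgl b q - sgl a q))).natAbs else 0))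
      = (if p < q then (((sgl b p - sgl a p)
          - (sgl b q - sgl a q) : ℤ)).natAbs else 0) := by
    intro p q
    by_cases hpq : p < q
    · simp only [if_pos hpq, Pi.zero_apply, sub_zero, add_zero]
      by_cases hw : Equiv.swap a b q < Equiv.swap a b p
      · have h1 := key a b p q hab hpq hw
        have h2 : -2 ≤ (sgl b p - sgl a p : ℤ)
            - (sgl b q - sgl a q) := by
          simp only [sgl_apply]
          split_ifs <;> omega
        simp only [if_pos hw]
        omega
      · simp only [if_neg hw, zero_add]
        simp
    · simp [hpq]
  unfold len
  simp only
  rw [← Finset.sum_add_distrib]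
  rw [Finset.sum_congr rfl fun p _ => ?_]
  · exact lemS a b (ne_of_lt hab)
  · rw [← Finset.sum_add_distrib]
    exact Finset.sum_congr rfl fun q _ => hterm p q

lemma lenT (a b : Fin n) (hab : a ≠ b) (c : ℕ) :
    len (⟨1, fun i => (c : ℤ) * (sgl b i - sgl a i)⟩ : Aff n)
      = c * (2 * (n - 1)) := by
  have hterm : ∀ p q : Fin n,
      (if p < q then ((if (1 : Equiv.Perm (Fin n)) q < (1 : Equiv.Perm (Fin n)) p then (1:ℤ) else 0)
          + ((c : ℤ) * (sgl b p - sgl a p)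
            - (c : ℤ) * (sgl b q - sgl a q))).natAbs else 0)
      = c * (if p < q then (((sgl b p - sgl a p)
          - (sgl b q - sgl a q) : ℤ)).natAbs else 0) := by
    intro p q
    by_cases hpq : p < q
    · simp only [if_pos hpq, Equiv.Perm.one_apply]
      simp only [asymm hpq, ↓reduceIte, zero_add]
      rw [← mul_sub, Int.natAbs_mul, Int.natAbs_natCast]
    · simp [hpq]
  unfold len
  simp only
  rw [Finset.sum_congr rfl fun p _ => Finset.sum_congr rfl fun q _ => hterm p q]
  simp only [← Finset.mul_sum]
  rw [lemS a b hab]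

lemma pow_mk (g : Fin n → ℤ) (m : ℕ) :
    ((⟨1, g⟩ : Aff n) ^ m) = ⟨1, fun i => (m : ℤ) * g i⟩ := by
  induction m with
  | zero =>
    rw [pow_zero, one_def]
    refine Aff.ext rfl (funext fun i => ?_)
    simp
  | succ k ih =>
    rw [pow_succ, ih, mk_mul]
    refine Aff.ext (mul_one 1) (funext fun i => ?_)
    show (k : ℤ) * g ((1 : Equiv.Perm (Fin n)) i) + g i = ((k+1 : ℕ) : ℤ) * g i
    rw [Equiv.Perm.one_apply]
    push_cast
    ring

end AffA.Aff

open AffA Aff in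
/-- for `β + β' = c`, the product `(s_β s_{β'})^m` is reduced
(its length is the sum of the lengths of its `2m` reflection factors); in
particular `ℓ((s_β s_{β'})^m) = 2m(n−1)`. -/
theorem pow_reduced (n : ℕ) (hn : 3 ≤ n) (β β' : Fin n → ℤ)
    (hβ : IsPosRoot β) (hβ' : IsPosRoot β') (hc : β + β' = cvec n)
    (m : ℕ) (hm : 1 ≤ m) :
    len ((sref β * sref β') ^ m) = m * (len (sref β) + len (sref β')) ∧
    len ((sref β * sref β') ^ m) = 2 * m * (n - 1) := by
  classical
  have hn0 : 0 < n := by omega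
  have hadd : ∀ i, β i + β' i = 1 := by
    intro i
    have h := congrFun hc i
    simpa [cvec] using h
  have h01 : ∀ i, β i = 0 ∨ β i = 1 := by
    intro i
    have h1 := hβ.2 i
    have h2 := hβ'.2 i
    have h3 := hadd i
    omega
  obtain ⟨p, q, hpq, hf⟩ := exists_pq (finPart β) (sum_finPart β)
    (by rw [← pairing_self hn β]; exact hβ.1)
  have hf' : finPart β' = Pi.single q 1 - Pi.single p 1 := by
    funext i
    have hneg : finPart β' i = - finPart β i := by
      unfold finPart
      have e1 := hadd (fsucc i)
      have e2 := hadd i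
      omega
    rw [hneg, congrFun hf i]
    simp [Pi.single_apply]
  have hc0' : coeff0 β' = 1 - coeff0 β := by
    unfold coeff0
    rw [dif_pos hn0, dif_pos hn0]
    have := hadd ⟨0, hn0⟩
    omega
  have hs1 : sref β = ⟨Equiv.swap p q, fun i => coeff0 β * finPart β i⟩ :=
    sref_eq β p q hpq hf
  have hs2 : sref β' = ⟨Equiv.swap q p, fun i => coeff0 β' * finPart β' i⟩ :=
    sref_eq β' q p hpq.symm hf'
  -- the product is the translation t_{e_q - e_p}
  have hprod : sref β * sref β' = ⟨1, fun i => sgl q i - sgl p i⟩ := by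
    rw [hs1, hs2, mk_mul]
    refine Aff.ext ?_ (funext fun i => ?_)
    · show Equiv.swap p q * Equiv.swap q p = 1
      rw [Equiv.swap_comm q p, Equiv.swap_mul_self]
    · show coeff0 β * finPart β (Equiv.swap q p i) + coeff0 β' * finPart β' i = _
      have hswap : finPart β (Equiv.swap q p i) = - finPart β i := by
        rcases eq_or_ne i p with rfl | hip
        · rw [Equiv.swap_apply_right, congrFun hf q, congrFun hf i]
          simp [Pi.single_apply, hpq, Ne.symm hpq]
        · rcases eq_or_ne i q with rfl | hiq
          · rw [Equiv.swap_apply_left, congrFun hf p, congrFun hf i]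
            simp [Pi.single_apply, hpq, Ne.symm hpq]
          · rw [Equiv.swap_apply_of_ne_of_ne hiq hip, congrFun hf i]
            simp [Pi.single_apply, hip, hiq]
      rw [hswap, hc0', congrFun hf i, congrFun hf' i]
      simp only [Pi.sub_apply, sgl]
      ring
  have hpow : (sref β * sref β') ^ m = ⟨1, fun i => (m : ℤ) * (sgl q i - sgl p i)⟩ := by
    rw [hprod, pow_mk]
  have hlenpow : len ((sref β * sref β') ^ m) = m * (2 * (n - 1)) := by
    rw [hpow]
    exact lenT p q hpq m
  have hsum2 : len (sref β) + len (sref β') = 2 * (n - 1) := by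
    rcases hpq.lt_or_gt with hlt | hlt
    · -- p < q : coeff0 β = 0
      have hb0 : coeff0 β = 0 := by
        unfold coeff0
        rw [dif_pos hn0]
        exact (val_zero_eq hn β p q hf h01).1 hlt
      have hs1' : sref β = ⟨Equiv.swap p q, 0⟩ := by
        rw [hs1]
        refine Aff.ext rfl (funext fun i => ?_)
        rw [hb0]
        simp
      have hs2' : sref β' = ⟨Equiv.swap p q, fun i => sgl q i - sgl p i⟩ := by
        rw [hs2]
        refine Aff.ext (Equiv.swap_comm q p) (funext fun i => ?_)
        rw [hc0', hb0]
        show (1 - 0 : ℤ) * finPart β' i = sgl q i - sgl p i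
        rw [congrFun hf' i]
        simp [sgl]
      rw [hs1', hs2']
      exact lenF p q hlt
    · -- q < p : coeff0 β = 1
      have hb0 : coeff0 β = 1 := by
        unfold coeff0
        rw [dif_pos hn0]
        exact (val_zero_eq hn β p q hf h01).2 hlt
      have hs1' : sref β = ⟨Equiv.swap q p, fun i => sgl p i - sgl q i⟩ := by
        rw [hs1]
        refine Aff.ext (Equiv.swap_comm p q) (funext fun i => ?_)
        rw [hb0]
        show (1 : ℤ) * finPart β i = sgl p i - sgl q i
        rw [congrFun hf i]
        simp [sgl]
      have hs2' : sref β' = ⟨Equiv.swap q p, 0⟩ := by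
        rw [hs2]
        refine Aff.ext rfl (funext fun i => ?_)
        rw [hc0', hb0]
        simp
      rw [hs1', hs2', add_comm]
      exact lenF q p hlt
  constructor
  · rw [hlenpow, hsum2]
  · rw [hlenpow]
    ring
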